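/- Suppose a self-similar profile δ(r) = c·r^α with c > 0 and α > −3, α ≠ 0, solves the static equation, where the coefficients satisfy â(δ, (3/(3+α))δ) = â(1, 3/(3+α))·(3/(3+α))^θ·δ^θ and similarly for b̂ (homogeneity of degree θ). Then matching powers of δ in â(δ,η)·α·δ/r − b̂(δ,η)·(η−δ)/r + (4πG/3)𝒦²·r·η·δ = 0 with η = (3/(3+α))δ forces θ = 1 + 2/α, i.e., α = 2/(θ−1), and hence θ ∉ [1/3, 1]. -/

import Mathlib

/-- Self-similar solutions force θ = 1 + 2/α, hence θ ∉ [1/3, 1]. -/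
theorem stmt_19 (θ α c a1 b1 G K : ℝ) (hc : 0 < c) (hα3 : -3 < α) (hα0 : α ≠ 0)
    (ha1 : a1 ≠ 0) (hG : 0 < G) (hK : 0 < K)
    (heq : ∀ r : ℝ, 0 < r →
      a1 * (3 / (3 + α)) ^ θ * (c * r ^ α) ^ θ * α * (c * r ^ α) / r
      - b1 * (3 / (3 + α)) ^ θ * (c * r ^ α) ^ θ *
          ((3 / (3 + α)) * (c * r ^ α) - c * r ^ α) / r
      + (4 * Real.pi * G / 3) * K ^ 2 * r * ((3 / (3 + α)) * (c * r ^ α)) *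
          (c * r ^ α) = 0) :
    θ = 1 + 2 / α ∧ θ ∉ Set.Icc (1 / 3 : ℝ) 1 := by
  have h3α : (0:ℝ) < 3 + α := by linarith
  have hkpos : (0:ℝ) < 3 / (3 + α) := by positivity
  have h1 := heq 1 one_pos
  have h2 := heq 2 two_pos
  simp only [Real.one_rpow, mul_one, div_one] at h1
  have ht : (0:ℝ) < (2:ℝ) ^ (α:ℝ) := Real.rpow_pos_of_pos two_pos α
  have hu : (0:ℝ) < (2:ℝ) ^ (α*θ) := Real.rpow_pos_of_pos two_pos _
  have hct : (c * (2:ℝ)^(α:ℝ)) ^ θ = c ^ θ * (2:ℝ)^(α*θ) := by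
    rw [Real.mul_rpow hc.le ht.le, Real.rpow_mul (by norm_num : (0:ℝ) ≤ 2)]
  rw [hct] at h2
  set t : ℝ := (2:ℝ) ^ (α:ℝ) with htdef
  set u : ℝ := (2:ℝ) ^ (α*θ) with hudef
  have key : 4*Real.pi*G/3 * K^2 * (3/(3+α)) * c^2 * (2*t^2 - u*t/2) = 0 := by
    linear_combination h2 - (u*t/2) * h1
  have hB : (0:ℝ) < 4*Real.pi*G/3 * K^2 * (3/(3+α)) * c^2 := by positivity
  have h0 : 2*t^2 - u*t/2 = 0 := by
    rcases mul_eq_zero.mp key with h | h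
    · exact absurd h hB.ne'
    · exact h
  have htu : u = 4 * t := by
    have h4 : (u - 4*t) * t = 0 := by linear_combination (-2 : ℝ) * h0
    rcases mul_eq_zero.mp h4 with h | h
    · linarith
    · exact absurd h ht.ne'
  have hexp : α * θ = α + 2 := by
    have h4t : (2:ℝ) ^ (α + 2) = 4 * t := by
      rw [Real.rpow_add two_pos]
      norm_num [mul_comm]
      exact htdef.symm
    have hlog : α * θ * Real.log 2 = (α + 2) * Real.log 2 := by
      rw [← Real.log_rpow two_pos, ← Real.log_rpow two_pos, h4t, ← htu]
    have hl2 : Real.log 2 ≠ 0 := (Real.log_pos (by norm_num)).ne'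
    exact mul_right_cancel₀ hl2 hlog
  have hθ : θ = 1 + 2 / α := by
    field_simp
    linear_combination hexp
  refine ⟨hθ, ?_⟩
  intro hmem
  obtain ⟨hlo, hhi⟩ := hmem
  rw [hθ] at hlo hhi
  rcases lt_or_gt_of_ne hα0 with hneg | hpos
  · have hd : 2 / α + 2/3 ≥ 0 := by linarith
    have hmul : (2 / α + 2/3) * (-α) ≥ 0 := mul_nonneg hd (by linarith)
    have hcan : 2 / α * α = 2 := div_mul_cancel₀ 2 hα0
    nlinarith
  · have : 0 < 2 / α := by positivity
    linarith
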